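/- Let X be a Hausdorff space. Two paths p, q : I → X are reparametrization equivalent if and only if there exist a path r : I → X and reparametrizations φ, ψ : I → I such that p = r ∘ φ and q = r ∘ ψ. -/

import Mathlib

open unitInterval

/-- `φ` is a reparametrization of the unit interval: a continuous weakly
increasing self-map of `I` with `φ 0 = 0` and `φ 1 = 1` (such a map is
automatically surjective). -/
def IsRepar (φ : I → I) : Prop :=
  Continuous φ ∧ Monotone φ ∧ φ 0 = 0 ∧ φ 1 = 1

/-- Two paths `p, q : I → X` are reparametrization equivalent if
`p ∘ φ = q ∘ ψ` for some reparametrizations `φ, ψ` of `I`. -/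
def ReparEquiv {X : Type*} (p q : I → X) : Prop :=
  ∃ φ ψ : I → I, IsRepar φ ∧ IsRepar ψ ∧ p ∘ φ = q ∘ ψ

open Set Function Topology
lemma isRepar_id : IsRepar id :=
  ⟨continuous_id, monotone_id, rfl, rfl⟩

lemma IsRepar.comp {φ ψ : I → I} (hφ : IsRepar φ) (hψ : IsRepar ψ) : IsRepar (φ ∘ ψ) :=
  ⟨hφ.1.comp hψ.1, hφ.2.1.comp hψ.2.1, by simp [Function.comp, hψ.2.2.1, hφ.2.2.1],
    by simp [Function.comp, hψ.2.2.2, hφ.2.2.2]⟩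

lemma IsRepar.surjective {φ : I → I} (h : IsRepar φ) : Function.Surjective φ := by
  intro y
  have h2 := intermediate_value_univ (a := (0:I)) (b := 1) (f := φ) h.1
  rw [h.2.2.1, h.2.2.2] at h2
  exact h2 ⟨y.2.1, y.2.2⟩

section Pullback

variable {φ ψ : I → I}

/-- real extension of a map I → I -/
noncomputable def rext (φ : I → I) : ℝ → ℝ := fun x => (φ (projIcc 0 1 zero_le_one x) : ℝ)

lemma rext_mono (h : Monotone φ) : Monotone (rext φ) :=
  fun _ _ hxy => Subtype.coe_le_coe.2 (h (monotone_projIcc zero_le_one hxy))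

lemma rext_cont (h : Continuous φ) : Continuous (rext φ) :=
  continuous_subtype_val.comp (h.comp continuous_projIcc)

lemma rext_mem (φ : I → I) (x : ℝ) : rext φ x ∈ Icc (0:ℝ) 1 := (φ _).2

lemma rext_of_mem (φ : I → I) {x : ℝ} (hx : x ∈ Icc (0:ℝ) 1) : rext φ x = (φ ⟨x, hx⟩ : ℝ) := by
  rw [rext, projIcc_of_mem]

lemma rext_nonpos (h : IsRepar φ) {x : ℝ} (hx : x ≤ 0) : rext φ x = 0 := by
  have h0 : projIcc (0:ℝ) 1 zero_le_one x = 0 := by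
    rw [projIcc_of_le_left _ hx]; exact Subtype.ext (by simp)
  rw [rext, h0, h.2.2.1]; simp

lemma rext_ge_one (h : IsRepar φ) {x : ℝ} (hx : 1 ≤ x) : rext φ x = 1 := by
  have h0 : projIcc (0:ℝ) 1 zero_le_one x = 1 := by
    rw [projIcc_of_right_le _ hx]; exact Subtype.ext (by simp)
  rw [rext, h0, h.2.2.2]; simp

variable (φ ψ) in
/-- the root set: pairs (s, u-s) in the band with Φ s = Ψ (u - s) -/
def Rset (u : ℝ) : Set ℝ :=
  {s | s ∈ Icc (max 0 (u-1)) (min 1 u) ∧ rext φ s = rext ψ (u - s)}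

lemma Rset_exists_low (hφ : IsRepar φ) (hψ : IsRepar ψ) {u : ℝ} (hu : u ∈ Icc (0:ℝ) 2)
    {m : ℝ} (hm : max 0 (u-1) ≤ m) (hgm : 0 ≤ rext φ m - rext ψ (u - m))
    (hm' : m ≤ min 1 u) :
    ∃ s ∈ Rset φ ψ u, s ≤ m := by
  set l := max 0 (u-1) with hl
  have hgl : rext φ l - rext ψ (u - l) ≤ 0 := by
    rcases le_total (u-1) 0 with h1 | h1
    · have : l = 0 := max_eq_left h1
      rw [this, rext_nonpos hφ le_rfl]
      simp [sub_nonneg, (rext_mem ψ _).1]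
    · have : l = u - 1 := max_eq_right h1
      rw [this]
      have : u - (u-1) = 1 := by ring
      rw [this, rext_ge_one hψ le_rfl]
      simp [sub_nonpos, (rext_mem φ _).2]
  have hcont : ContinuousOn (fun s => rext φ s - rext ψ (u - s)) (Icc l m) :=
    ((rext_cont hφ.1).sub ((rext_cont hψ.1).comp (continuous_const.sub continuous_id))).continuousOn
  have := intermediate_value_Icc hm hcont
  have h0 : (0:ℝ) ∈ Icc (rext φ l - rext ψ (u - l)) (rext φ m - rext ψ (u - m)) := ⟨hgl, hgm⟩
  obtain ⟨s, hs, hs0⟩ := this h0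
  exact ⟨s, ⟨⟨hs.1, le_trans hs.2 hm'⟩, by linarith [sub_eq_zero.1 hs0]⟩, hs.2⟩

lemma Rset_nonempty (hφ : IsRepar φ) (hψ : IsRepar ψ) {u : ℝ} (hu : u ∈ Icc (0:ℝ) 2) :
    (Rset φ ψ u).Nonempty := by
  have hlr : max 0 (u-1) ≤ min 1 u := by
    simp only [max_le_iff, le_min_iff]
    constructor <;> constructor <;> linarith [hu.1, hu.2]
  have hgr : 0 ≤ rext φ (min 1 u) - rext ψ (u - min 1 u) := by
    rcases le_total (1:ℝ) u with h1 | h1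
    · have : min 1 u = 1 := min_eq_left h1
      rw [this, rext_ge_one hφ le_rfl]
      simp [sub_nonneg, (rext_mem ψ _).2]
    · have : min 1 u = u := min_eq_right h1
      rw [this]
      have : u - u = 0 := by ring
      rw [this, rext_nonpos hψ le_rfl]
      simp [sub_nonneg, (rext_mem φ _).1]
  obtain ⟨s, hs, -⟩ := Rset_exists_low hφ hψ hu hlr hgr le_rfl
  exact ⟨s, hs⟩

end Pullback
section Pullback2

variable {φ ψ : I → I}

lemma Rset_closed (hφ : IsRepar φ) (hψ : IsRepar ψ) (u : ℝ) : IsClosed (Rset φ ψ u) := by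
  apply IsClosed.inter isClosed_Icc
  exact isClosed_eq (rext_cont hφ.1) ((rext_cont hψ.1).comp (continuous_const.sub continuous_id))

noncomputable def Aroot (φ ψ : I → I) (u : ℝ) : ℝ := sInf (Rset φ ψ u)

lemma Aroot_mem (hφ : IsRepar φ) (hψ : IsRepar ψ) {u : ℝ} (hu : u ∈ Icc (0:ℝ) 2) :
    Aroot φ ψ u ∈ Rset φ ψ u := by
  have hcpt : IsCompact (Rset φ ψ u) :=
    isCompact_Icc.of_isClosed_subset (Rset_closed hφ hψ u) (fun s hs => hs.1)
  exact hcpt.sInf_mem (Rset_nonempty hφ hψ hu)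

lemma Aroot_le {u : ℝ} {s : ℝ} (hs : s ∈ Rset φ ψ u) : Aroot φ ψ u ≤ s :=
  csInf_le ⟨max 0 (u-1), fun t ht => ht.1.1⟩ hs

lemma Aroot_mono (hφ : IsRepar φ) (hψ : IsRepar ψ) {u u' : ℝ} (hu : u ∈ Icc (0:ℝ) 2)
    (hu' : u' ∈ Icc (0:ℝ) 2) (huu : u ≤ u') : Aroot φ ψ u ≤ Aroot φ ψ u' := by
  set A' := Aroot φ ψ u' with hA'
  have hmemA' := Aroot_mem hφ hψ hu'
  set m := min A' (min 1 u) with hm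
  have hlm : max 0 (u-1) ≤ m := by
    apply le_min
    · exact le_trans (max_le_max le_rfl (by linarith)) hmemA'.1.1
    · simp only [max_le_iff, le_min_iff]
      constructor <;> constructor <;> linarith [hu.1, hu.2]
  have hgm : 0 ≤ rext φ m - rext ψ (u - m) := by
    rcases le_total A' (min 1 u) with h1 | h1
    · have hmA : m = A' := min_eq_left h1
      rw [hmA]
      have key : rext φ A' = rext ψ (u' - A') := hmemA'.2
      have : rext ψ (u - A') ≤ rext ψ (u' - A') := rext_mono hψ.2.1 (by linarith)
      linarith
    · have hmA : m = min 1 u := min_eq_right h1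
      rw [hmA]
      rcases le_total (1:ℝ) u with h2 | h2
      · rw [min_eq_left h2, rext_ge_one hφ le_rfl]
        linarith [(rext_mem ψ (u-1)).2]
      · rw [min_eq_right h2, sub_self, rext_nonpos hψ le_rfl]
        linarith [(rext_mem φ u).1]
  obtain ⟨s, hs, hsm⟩ := Rset_exists_low hφ hψ hu hlm hgm (min_le_right _ _)
  exact le_trans (Aroot_le hs) (le_trans hsm (min_le_left _ _))

lemma Aroot_lip (hφ : IsRepar φ) (hψ : IsRepar ψ) {u u' : ℝ} (hu : u ∈ Icc (0:ℝ) 2)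
    (hu' : u' ∈ Icc (0:ℝ) 2) (huu : u ≤ u') : Aroot φ ψ u' ≤ Aroot φ ψ u + (u' - u) := by
  set A := Aroot φ ψ u with hA
  have hmemA := Aroot_mem hφ hψ hu
  set c := A + (u' - u) with hc
  set m := min c (min 1 u') with hm
  have hlm : max 0 (u'-1) ≤ m := by
    apply le_min
    · have h1 : max 0 (u-1) ≤ A := hmemA.1.1
      have : max 0 (u'-1) ≤ max 0 (u-1) + (u' - u) := by
        simp only [max_le_iff]
        constructor
        · linarith [le_max_left (0:ℝ) (u-1)]
        · linarith [le_max_right (0:ℝ) (u-1)]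
      linarith
    · simp only [max_le_iff, le_min_iff]
      constructor <;> constructor <;> linarith [hu'.1, hu'.2]
  have hgm : 0 ≤ rext φ m - rext ψ (u' - m) := by
    rcases le_total c (min 1 u') with h1 | h1
    · have hmc : m = c := min_eq_left h1
      rw [hmc]
      have key : rext φ A = rext ψ (u - A) := hmemA.2
      have h2 : rext φ A ≤ rext φ c := rext_mono hφ.2.1 (by rw [hc]; linarith)
      have h3 : u' - c = u - A := by rw [hc]; ring
      rw [h3]
      linarith
    · have hmc : m = min 1 u' := min_eq_right h1
      rw [hmc]
      rcases le_total (1:ℝ) u' with h2 | h2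
      · rw [min_eq_left h2, rext_ge_one hφ le_rfl]
        linarith [(rext_mem ψ (u'-1)).2]
      · rw [min_eq_right h2, sub_self, rext_nonpos hψ le_rfl]
        linarith [(rext_mem φ u').1]
  obtain ⟨s, hs, hsm⟩ := Rset_exists_low hφ hψ hu' hlm hgm (min_le_right _ _)
  exact le_trans (Aroot_le hs) (le_trans hsm (min_le_left _ _))

lemma exists_pullback (hφ : IsRepar φ) (hψ : IsRepar ψ) :
    ∃ a b : I → I, IsRepar a ∧ IsRepar b ∧ φ ∘ a = ψ ∘ b := by
  have hmem2 : ∀ w : I, 2 * (w:ℝ) ∈ Icc (0:ℝ) 2 := fun w => ⟨by linarith [w.2.1], by linarith [w.2.2]⟩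
  have hband : ∀ w : I, Aroot φ ψ (2*(w:ℝ)) ∈ Icc (max 0 (2*(w:ℝ)-1)) (min 1 (2*(w:ℝ))) :=
    fun w => (Aroot_mem hφ hψ (hmem2 w)).1
  have hAmem : ∀ w : I, Aroot φ ψ (2*(w:ℝ)) ∈ Icc (0:ℝ) 1 := by
    intro w
    obtain ⟨h1, h2⟩ := hband w
    exact ⟨le_trans (le_max_left _ _) h1, le_trans h2 (min_le_left _ _)⟩
  have hBmem : ∀ w : I, 2*(w:ℝ) - Aroot φ ψ (2*(w:ℝ)) ∈ Icc (0:ℝ) 1 := by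
    intro w
    obtain ⟨h1, h2⟩ := hband w
    constructor
    · have := le_trans h2 (min_le_right _ _); linarith
    · have := le_trans (le_max_right _ _) h1; linarith
  set a : I → I := fun w => ⟨Aroot φ ψ (2*(w:ℝ)), hAmem w⟩ with ha
  set b : I → I := fun w => ⟨2*(w:ℝ) - Aroot φ ψ (2*(w:ℝ)), hBmem w⟩ with hb
  have hA0 : Aroot φ ψ 0 = 0 := by
    have := Aroot_mem hφ hψ (left_mem_Icc.2 (by norm_num))
    have h1 := this.1
    simp only [zero_sub, min_eq_right, max_le_iff] at h1
    have h2 : Aroot φ ψ 0 ≤ min 1 0 := h1.2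
    have h3 : (0:ℝ) ≤ Aroot φ ψ 0 := le_trans (le_max_left _ _) h1.1
    simp only [min_comm, min_eq_left (zero_le_one)] at h2
    linarith [min_le_right (1:ℝ) 0, h2]
  have hA2 : Aroot φ ψ 2 = 1 := by
    have := Aroot_mem hφ hψ (right_mem_Icc.2 (by norm_num))
    have h1 := this.1.1
    have h2 := this.1.2
    have : max (0:ℝ) (2-1) = 1 := by norm_num
    rw [this] at h1
    have : min (1:ℝ) 2 = 1 := by norm_num
    rw [this] at h2
    linarith
  have haMono : Monotone a := by
    intro w w' hww
    apply Subtype.mk_le_mk.2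
    exact Aroot_mono hφ hψ (hmem2 w) (hmem2 w') (by have := Subtype.coe_le_coe.2 hww; linarith)
  have hbMono : Monotone b := by
    intro w w' hww
    apply Subtype.mk_le_mk.2
    have h1 := Aroot_lip hφ hψ (hmem2 w) (hmem2 w') (by have := Subtype.coe_le_coe.2 hww; linarith)
    linarith
  have haLip : ∀ w w' : I, dist (a w) (a w') ≤ 2 * dist w w' := by
    intro w w'
    rw [Subtype.dist_eq, Subtype.dist_eq, Real.dist_eq, Real.dist_eq]
    rcases le_total (w:ℝ) (w':ℝ) with h | h
    · have h1 := Aroot_mono hφ hψ (hmem2 w) (hmem2 w') (by linarith)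
      have h2 := Aroot_lip hφ hψ (hmem2 w) (hmem2 w') (by linarith)
      rw [abs_of_nonpos (by simpa [ha] using h1), abs_of_nonpos (by linarith)]
      simp only [ha]
      linarith
    · have h1 := Aroot_mono hφ hψ (hmem2 w') (hmem2 w) (by linarith)
      have h2 := Aroot_lip hφ hψ (hmem2 w') (hmem2 w) (by linarith)
      rw [abs_of_nonneg (by simpa [ha] using h1), abs_of_nonneg (by linarith)]
      simp only [ha]
      linarith
  have haCont : Continuous a := by
    rw [Metric.continuous_iff]
    intro w ε hε
    refine ⟨ε/2, by linarith, fun w' hw' => ?_⟩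
    calc dist (a w') (a w) ≤ 2 * dist w' w := haLip w' w
    _ < ε := by linarith
  have hbCont : Continuous b := by
    apply Continuous.subtype_mk
    apply Continuous.sub
    · exact (continuous_const.mul continuous_subtype_val)
    · exact continuous_subtype_val.comp haCont
  refine ⟨a, b, ⟨haCont, haMono, ?_, ?_⟩, ⟨hbCont, hbMono, ?_, ?_⟩, ?_⟩
  · apply Subtype.ext; show Aroot φ ψ (2 * ((0:I):ℝ)) = 0; norm_num [hA0]
  · apply Subtype.ext; show Aroot φ ψ (2 * ((1:I):ℝ)) = 1; norm_num [hA2]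
  · apply Subtype.ext; show 2*((0:I):ℝ) - Aroot φ ψ (2 * ((0:I):ℝ)) = 0; norm_num [hA0]
  · apply Subtype.ext; show 2*((1:I):ℝ) - Aroot φ ψ (2 * ((1:I):ℝ)) = 1; norm_num [hA2]
  · funext w
    have hroot := (Aroot_mem hφ hψ (hmem2 w)).2
    have h1 : rext φ (Aroot φ ψ (2*(w:ℝ))) = (φ (a w) : ℝ) := rext_of_mem φ (hAmem w)
    have h2 : rext ψ (2*(w:ℝ) - Aroot φ ψ (2*(w:ℝ))) = (ψ (b w) : ℝ) := rext_of_mem ψ (hBmem w)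
    exact Subtype.ext (by rw [Function.comp, Function.comp, ← h1, ← h2]; exact hroot)

end Pullback2
section Regularize

/-- `p` is constant on the interval `[s,t]`. -/
def ConstOn {X : Type*} (p : I → X) (s t : I) : Prop := ∀ x ∈ Set.Icc s t, p x = p s

lemma coe_max (x y : I) : ((max x y : I) : ℝ) = max (x:ℝ) (y:ℝ) := by
  rcases le_total x y with h|h
  · rw [max_eq_right h, max_eq_right (Subtype.coe_le_coe.2 h)]
  · rw [max_eq_left h, max_eq_left (Subtype.coe_le_coe.2 h)]

lemma coe_min (x y : I) : ((min x y : I) : ℝ) = min (x:ℝ) (y:ℝ) := by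
  rcases le_total x y with h|h
  · rw [min_eq_left h, min_eq_left (Subtype.coe_le_coe.2 h)]
  · rw [min_eq_right h, min_eq_right (Subtype.coe_le_coe.2 h)]

lemma clamp_lip {A B s t : ℝ} (hst : s ≤ t) : max A (min t B) - max A (min s B) ≤ t - s := by
  simp only [max_def, min_def]
  split_ifs <;> linarith

variable {X : Type*} [TopologicalSpace X] [T2Space X] {p : I → X}

lemma exists_sep (hp : Continuous p) {a b : I} (hab : a ≤ b) (hne : p a ≠ p b) :
    ∃ g : I → ℝ, Continuous g ∧ Monotone g ∧ (∀ t, g t ∈ Set.Icc (0:ℝ) 1) ∧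
      (∀ t, t ≤ a → g t = 0) ∧ (∀ t, b ≤ t → 1 ≤ g t) ∧
      (∀ s t, s ≤ t → ConstOn p s t → g s = g t) := by
  classical
  haveI : CompactSpace (Set.range p) := isCompact_iff_compactSpace.mp (isCompact_range hp)
  have hdisj : Disjoint ({(⟨p a, Set.mem_range_self a⟩ : Set.range p)} : Set (Set.range p))
      {(⟨p b, Set.mem_range_self b⟩ : Set.range p)} := by
    rw [Set.disjoint_singleton]
    intro hcon
    exact hne (congrArg Subtype.val hcon)
  obtain ⟨f, hf0, hf1, hf01⟩ := exists_continuous_zero_one_of_isClosed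
    (isClosed_singleton (x := (⟨p a, Set.mem_range_self a⟩ : Set.range p)))
    (isClosed_singleton (x := (⟨p b, Set.mem_range_self b⟩ : Set.range p))) hdisj
  set h : I → ℝ := fun t => f ⟨p t, Set.mem_range_self t⟩ with hh
  have hhcont : Continuous h := f.continuous.comp (hp.subtype_mk _)
  have hha : h a = 0 := hf0 rfl
  have hhb : h b = 1 := hf1 rfl
  have hh01 : ∀ t, h t ∈ Set.Icc (0:ℝ) 1 := fun t => hf01 _
  have hhconst : ∀ s t : I, p s = p t → h s = h t := by
    intro s t hst
    simp only [hh]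
    congr 1
    exact Subtype.ext hst
  set c : I → I := fun t => max a (min t b) with hc
  have hcmono : Monotone c := fun s t hst => max_le_max le_rfl (min_le_min hst le_rfl)
  have hac : ∀ t, a ≤ c t := fun t => le_max_left _ _
  have hccoe : ∀ t, ((c t : I) : ℝ) = max (a:ℝ) (min (t:ℝ) (b:ℝ)) := by
    intro t
    show ((max a (min t b) : I) : ℝ) = _
    rw [coe_max, coe_min]
  have hclip : ∀ s t : I, s ≤ t → ((c t : I) : ℝ) - ((c s : I) : ℝ) ≤ (t:ℝ) - (s:ℝ) := by
    intro s t hst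
    rw [hccoe, hccoe]
    exact clamp_lip hst
  set g : I → ℝ := fun t => sSup (h '' Set.Icc a (c t)) with hg
  have hbdd : ∀ t, BddAbove (h '' Set.Icc a (c t)) := by
    intro t
    refine ⟨1, ?_⟩
    rintro x ⟨y, -, rfl⟩
    exact (hh01 y).2
  have hne' : ∀ t, (h '' Set.Icc a (c t)).Nonempty :=
    fun t => ⟨h a, Set.mem_image_of_mem h (Set.left_mem_Icc.2 (hac t))⟩
  have hgmono : Monotone g := by
    intro s t hst
    exact csSup_le_csSup (hbdd t) (hne' s)
      (Set.image_mono (Set.Icc_subset_Icc le_rfl (hcmono hst)))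
  have hcs_le_gs : ∀ t, h (c t) ≤ g t :=
    fun t => le_csSup (hbdd t) (Set.mem_image_of_mem h (Set.right_mem_Icc.2 (hac t)))
  have hg0 : ∀ t, t ≤ a → g t = 0 := by
    intro t ht
    have hct : c t = a := by
      rw [hc]
      simp only
      rw [min_eq_left (le_trans ht hab), max_eq_left ht]
    rw [hg]
    simp only [hct, Set.Icc_self, Set.image_singleton, csSup_singleton]
    exact hha
  have hg1 : ∀ t, b ≤ t → 1 ≤ g t := by
    intro t ht
    have hct : c t = b := by
      rw [hc]; simp only
      rw [min_eq_right ht, max_eq_right hab]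
    rw [← hhb]
    have := hcs_le_gs t
    rwa [hct] at this
  have hgmem : ∀ t, g t ∈ Set.Icc (0:ℝ) 1 := by
    intro t
    constructor
    · exact le_trans (hh01 (c t)).1 (hcs_le_gs t)
    · apply csSup_le (hne' t)
      rintro x ⟨y, -, rfl⟩
      exact (hh01 y).2
  -- interval facts for the key case `c s < x ≤ c t`
  have hkey : ∀ s t x : I, s ≤ t → c s < x → x ≤ c t →
      (s ≤ x ∧ x ≤ t ∧ s ≤ c s ∧ c s ≤ t) := by
    intro s t x hst hcsx hxct
    have hcsct : c s < c t := lt_of_lt_of_le hcsx hxct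
    have hsb : s ≤ b := by
      by_contra hcon
      push_neg at hcon
      have h1 : c s = b := by
        rw [hc]; simp only
        rw [min_eq_right hcon.le, max_eq_right hab]
      have h2 : c t = b := by
        rw [hc]; simp only
        rw [min_eq_right (le_trans hcon.le hst), max_eq_right hab]
      rw [h1, h2] at hcsct
      exact lt_irrefl _ hcsct
    have hscs : s ≤ c s := by
      rw [hc]; simp only
      rw [min_eq_left hsb]
      exact le_max_right _ _
    have hat : a ≤ t := by
      by_contra hcon
      push_neg at hcon
      have h1 : c s = a := by
        rw [hc]; simp only
        exact max_eq_left (le_trans (min_le_left _ _) (le_trans hst hcon.le))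
      have h2 : c t = a := by
        rw [hc]; simp only
        exact max_eq_left (le_trans (min_le_left _ _) hcon.le)
      rw [h1, h2] at hcsct
      exact lt_irrefl _ hcsct
    have hxt : x ≤ t := by
      refine le_trans hxct ?_
      rw [hc]; simp only
      exact max_le hat (min_le_left _ _)
    exact ⟨le_trans hscs hcsx.le, hxt, hscs, le_trans hcsx.le hxt⟩
  have hgconst : ∀ s t, s ≤ t → ConstOn p s t → g s = g t := by
    intro s t hst hconst
    refine le_antisymm (hgmono hst) ?_
    apply csSup_le (hne' t)
    rintro x ⟨y, hy, rfl⟩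
    rcases le_total y (c s) with hycs | hycs
    · exact le_csSup (hbdd s) (Set.mem_image_of_mem h ⟨hy.1, hycs⟩)
    · rcases lt_or_eq_of_le hycs with hycs | hycs
      · obtain ⟨h1, h2, h3, h4⟩ := hkey s t y hst hycs hy.2
        have : h y = h (c s) := by
          apply hhconst
          rw [hconst y ⟨h1, h2⟩, hconst (c s) ⟨h3, h4⟩]
        rw [this]
        exact hcs_le_gs s
      · rw [← hycs]
        exact hcs_le_gs s
  have hgcont : Continuous g := by
    have huc := CompactSpace.uniformContinuous_of_continuous hhcont
    rw [Metric.uniformContinuous_iff] at huc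
    have helper : ∀ ε > (0:ℝ), ∃ δ > (0:ℝ), ∀ s t : I, s ≤ t → (t:ℝ) - (s:ℝ) < δ →
        g t ≤ g s + ε := by
      intro ε hε
      obtain ⟨δ, hδ, hδ'⟩ := huc ε hε
      refine ⟨δ, hδ, fun s t hst hd => ?_⟩
      apply csSup_le (hne' t)
      rintro x ⟨y, hy, rfl⟩
      rcases le_total y (c s) with hycs | hycs
      · have : h y ≤ g s := le_csSup (hbdd s) (Set.mem_image_of_mem h ⟨hy.1, hycs⟩)
        linarith
      · have hdist : dist y (c s) < δ := by
          rw [Subtype.dist_eq, Real.dist_eq, abs_of_nonneg (sub_nonneg.2 (Subtype.coe_le_coe.2 hycs))]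
        
          have h1 : ((y : I) : ℝ) ≤ ((c t : I) : ℝ) := hy.2
          have h2 := hclip s t hst
          linarith
        have := hδ' hdist
        rw [Real.dist_eq] at this
        have h3 : h y ≤ h (c s) + ε := by
          have := abs_lt.1 this
          linarith [this.2]
        linarith [hcs_le_gs s]
    rw [Metric.continuous_iff]
    intro t₀ ε hε
    obtain ⟨δ, hδ, hδ'⟩ := helper (ε/2) (by linarith)
    refine ⟨δ, hδ, fun t hd => ?_⟩
    rw [Subtype.dist_eq, Real.dist_eq] at hd
    rw [Real.dist_eq]
    rcases le_total t t₀ with h | h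
    · have h1 := hδ' t t₀ h (by rw [abs_sub_comm] at hd; linarith [abs_lt.1 hd])
      have h2 := hgmono h
      rw [abs_of_nonpos (by linarith)]
      linarith
    · have h1 := hδ' t₀ t h (by linarith [abs_lt.1 hd])
      have h2 := hgmono h
      rw [abs_of_nonneg (by linarith)]
      linarith
  exact ⟨g, hgcont, hgmono, hgmem, hg0, hg1, hgconst⟩

end Regularize
section Quot

variable {X : Type*} [TopologicalSpace X] [T2Space X] {p : I → X}

lemma exists_interior_pair (hp : Continuous p) {s t : I} (hst : s ≤ t)
    (hnc : ¬ ConstOn p s t) : ∃ x y : I, s < x ∧ x < y ∧ y < t ∧ p x ≠ p y := by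
  by_contra hcon
  push_neg at hcon
  apply hnc
  rcases eq_or_lt_of_le hst with heq | hlt
  · intro x hx
    have : x = s := le_antisymm (heq ▸ hx.2) hx.1
    rw [this]
  · obtain ⟨z, hz⟩ := exists_between hlt
    have hall : ∀ w ∈ Set.Ioo s t, p w = p z := by
      intro w hw
      rcases lt_trichotomy w z with h | h | h
      · exact hcon w z hw.1 h hz.2
      · rw [h]
      · exact (hcon z w hz.1 h hw.2).symm
    have hclosed : IsClosed {x : I | p x = p z} := isClosed_eq hp continuous_const
    have hsub : Set.Icc s t ⊆ {x : I | p x = p z} := by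
      rw [← closure_Ioo (ne_of_lt hlt)]
      exact closure_minimal hall hclosed
    intro x hx
    rw [hsub hx, hsub (Set.left_mem_Icc.2 hst)]

lemma exists_dense_pair (hp : Continuous p) {D : Set I} (hD : Dense D) {s t : I}
    (hst : s ≤ t) (hnc : ¬ ConstOn p s t) :
    ∃ a b : I, a ∈ D ∧ b ∈ D ∧ s < a ∧ a < b ∧ b < t ∧ p a ≠ p b := by
  obtain ⟨x, y, hsx, hxy, hyt, hne⟩ := exists_interior_pair hp hst hnc
  obtain ⟨U, V, hU, hV, hxU, hyV, hUV⟩ := t2_separation hne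
  obtain ⟨a, haD, haW⟩ := hD.exists_mem_open (hU.preimage hp |>.inter isOpen_Ioo)
    ⟨x, hxU, hsx, hxy⟩
  obtain ⟨b, hbD, hbW⟩ := hD.exists_mem_open (hV.preimage hp |>.inter isOpen_Ioo)
    ⟨y, hyV, haW.2.2, hyt⟩
  refine ⟨a, b, haD, hbD, haW.2.1, hbW.2.1, hbW.2.2, ?_⟩
  intro hcon
  exact Set.disjoint_left.1 hUV haW.1 (hcon ▸ hbW.1)

lemma exists_quot (hp : Continuous p) (hnc : ¬ ConstOn p 0 1) :
    ∃ ρ : I → I, IsRepar ρ ∧ Function.Surjective ρ ∧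
      (∀ s t, s ≤ t → ConstOn p s t → ρ s = ρ t) ∧
      (∀ s t, s ≤ t → ρ s = ρ t → ConstOn p s t) := by
  classical
  obtain ⟨D, hDc, hDd⟩ := TopologicalSpace.exists_countable_dense I
  set T : Set (I × I) := {e | e.1 ∈ D ∧ e.2 ∈ D ∧ e.1 < e.2 ∧ p e.1 ≠ p e.2} with hT
  have hTc : T.Countable :=
    Set.Countable.mono (fun e he => Set.mem_prod.2 ⟨he.1, he.2.1⟩) (hDc.prod hDc)
  have h01 : (0:I) ≤ 1 := Subtype.mk_le_mk.2 zero_le_one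
  have hTne : T.Nonempty := by
    obtain ⟨a, b, haD, hbD, -, hab, -, hne⟩ := exists_dense_pair hp hDd h01 hnc
    exact ⟨(a, b), haD, hbD, hab, hne⟩
  obtain ⟨e, hrange⟩ := hTc.exists_eq_range hTne
  have heT : ∀ n, e n ∈ T := fun n => hrange ▸ Set.mem_range_self n
  have hsep : ∀ n : ℕ, ∃ g : I → ℝ, Continuous g ∧ Monotone g ∧
      (∀ t, g t ∈ Set.Icc (0:ℝ) 1) ∧ (∀ t, t ≤ (e n).1 → g t = 0) ∧
      (∀ t, (e n).2 ≤ t → 1 ≤ g t) ∧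
      (∀ s t, s ≤ t → ConstOn p s t → g s = g t) :=
    fun n => exists_sep hp (le_of_lt (heT n).2.2.1) (heT n).2.2.2
  choose G hGc hGm hGmem hG0 hG1 hGconst using hsep
  have hu : Summable (fun n : ℕ => (1/2:ℝ)^(n+1)) := by
    have := summable_geometric_two.mul_right (1/2:ℝ)
    refine this.congr (fun n => ?_)
    rw [pow_succ]
  have hterm_nonneg : ∀ (n : ℕ) (t : I), 0 ≤ (1/2:ℝ)^(n+1) * G n t :=
    fun n t => mul_nonneg (by positivity) (hGmem n t).1
  have hterm_le : ∀ (n : ℕ) (t : I), (1/2:ℝ)^(n+1) * G n t ≤ (1/2:ℝ)^(n+1) := by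
    intro n t
    nlinarith [(hGmem n t).2, pow_pos (by norm_num : (0:ℝ) < 1/2) (n+1)]
  have hsummable : ∀ t : I, Summable (fun n => (1/2:ℝ)^(n+1) * G n t) :=
    fun t => Summable.of_nonneg_of_le (fun n => hterm_nonneg n t) (fun n => hterm_le n t) hu
  set ρ₀ : I → ℝ := fun t => ∑' n, (1/2:ℝ)^(n+1) * G n t with hρ₀
  have hρ₀cont : Continuous ρ₀ := by
    apply continuous_tsum (fun n => continuous_const.mul (hGc n)) hu
    intro n x
    rw [Real.norm_eq_abs, Pi.mul_apply, abs_of_nonneg (hterm_nonneg n x)]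
    exact hterm_le n x
  have hρ₀mono : Monotone ρ₀ := by
    intro s t hst
    exact Summable.tsum_le_tsum (fun n => mul_le_mul_of_nonneg_left (hGm n hst) (by positivity))
      (hsummable s) (hsummable t)
  have hρ₀const : ∀ s t : I, s ≤ t → ConstOn p s t → ρ₀ s = ρ₀ t := by
    intro s t hst hconst
    exact tsum_congr (fun n => by rw [hGconst n s t hst hconst])
  have hρ₀strict : ∀ s t : I, s ≤ t → ¬ ConstOn p s t → ρ₀ s < ρ₀ t := by
    intro s t hst hnc'
    obtain ⟨a, b, haD, hbD, hsa, hab, hbt, hne⟩ := exists_dense_pair hp hDd hst hnc'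
    have habT : (a, b) ∈ T := ⟨haD, hbD, hab, hne⟩
    rw [hrange] at habT
    obtain ⟨n, hn⟩ := habT
    have hn1 : (e n).1 = a := by rw [hn]
    have hn2 : (e n).2 = b := by rw [hn]
    have hGs : G n s = 0 := hG0 n s (hn1 ▸ hsa.le)
    have hGt : 1 ≤ G n t := hG1 n t (hn2 ▸ hbt.le)
    refine Summable.tsum_lt_tsum (i := n)
      (fun k => mul_le_mul_of_nonneg_left (hGm k hst) (by positivity)) ?_
      (hsummable s) (hsummable t)
    rw [hGs, mul_zero]
    have : (0:ℝ) < (1/2)^(n+1) := by positivity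
    nlinarith
  have hlt01 : ρ₀ 0 < ρ₀ 1 := hρ₀strict 0 1 h01 hnc
  have hd : 0 < ρ₀ 1 - ρ₀ 0 := sub_pos.2 hlt01
  have hmem : ∀ t : I, (ρ₀ t - ρ₀ 0) / (ρ₀ 1 - ρ₀ 0) ∈ Set.Icc (0:ℝ) 1 := by
    intro t
    have h1 : ρ₀ 0 ≤ ρ₀ t := hρ₀mono (Subtype.mk_le_mk.2 t.2.1)
    have h2 : ρ₀ t ≤ ρ₀ 1 := hρ₀mono (Subtype.mk_le_mk.2 t.2.2)
    exact ⟨div_nonneg (by linarith) hd.le, div_le_one_of_le₀ (by linarith) hd.le⟩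
  set ρ : I → I := fun t => ⟨(ρ₀ t - ρ₀ 0) / (ρ₀ 1 - ρ₀ 0), hmem t⟩ with hρdef
  have hρrepar : IsRepar ρ := by
    refine ⟨?_, ?_, ?_, ?_⟩
    · exact ((hρ₀cont.sub continuous_const).div_const _).subtype_mk _
    · intro s t hst
      apply Subtype.mk_le_mk.2
      have := hρ₀mono hst
      apply div_le_div_of_nonneg_right ?_ hd.le
      · linarith
    · exact Subtype.ext (by simp [hρdef])
    · exact Subtype.ext (by simp [hρdef, div_self hd.ne'])
  have hρconst : ∀ s t : I, s ≤ t → ConstOn p s t → ρ s = ρ t := by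
    intro s t hst hconst
    apply Subtype.ext
    show (ρ₀ s - ρ₀ 0) / (ρ₀ 1 - ρ₀ 0) = (ρ₀ t - ρ₀ 0) / (ρ₀ 1 - ρ₀ 0)
    rw [hρ₀const s t hst hconst]
  have hρrefl : ∀ s t : I, s ≤ t → ρ s = ρ t → ConstOn p s t := by
    intro s t hst heq
    by_contra hnc'
    have hstrict := hρ₀strict s t hst hnc'
    have : ((ρ s : I) : ℝ) < ((ρ t : I) : ℝ) := by
      show (ρ₀ s - ρ₀ 0) / (ρ₀ 1 - ρ₀ 0) < (ρ₀ t - ρ₀ 0) / (ρ₀ 1 - ρ₀ 0)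
      exact div_lt_div_of_pos_right (by linarith) hd
    rw [heq] at this
    exact lt_irrefl _ this
  exact ⟨ρ, hρrepar, hρrepar.surjective, hρconst, hρrefl⟩

lemma descend {Y : Type*} [TopologicalSpace Y] {ρ : I → I} (hcont : Continuous ρ)
    (hsurj : Function.Surjective ρ) {f : I → Y} (hf : Continuous f)
    (hresp : ∀ s t, ρ s = ρ t → f s = f t) :
    ∃ g : I → Y, Continuous g ∧ g ∘ ρ = f := by
  have hqm : Topology.IsQuotientMap ρ := hcont.isClosedMap.isQuotientMap hcont hsurj
  refine ⟨fun y => f (Function.surjInv hsurj y), ?_, ?_⟩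
  · rw [hqm.continuous_iff]
    have : (fun y => f (Function.surjInv hsurj y)) ∘ ρ = f :=
      funext fun t => hresp _ _ (Function.surjInv_eq hsurj (ρ t))
    rw [this]
    exact hf
  · exact funext fun t => hresp _ _ (Function.surjInv_eq hsurj (ρ t))

end Quot
section Main

lemma rext_coe {β : I → I} (s : I) : rext β (s:ℝ) = (β s : ℝ) := by
  simp only [rext, Set.projIcc_val]

lemma ivt_I {β : I → I} (hc : Continuous β) {s x : I} (hsx : s ≤ x) {z : I}
    (hz : β s ≤ z) (hz' : z ≤ β x) : ∃ w, s ≤ w ∧ w ≤ x ∧ β w = z := by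
  have hle : (s:ℝ) ≤ (x:ℝ) := Subtype.coe_le_coe.2 hsx
  have hmem : (z:ℝ) ∈ Set.Icc (rext β (s:ℝ)) (rext β (x:ℝ)) := by
    rw [rext_coe, rext_coe]
    exact ⟨Subtype.coe_le_coe.2 hz, Subtype.coe_le_coe.2 hz'⟩
  obtain ⟨w, hw, hweq⟩ := intermediate_value_Icc hle (rext_cont hc).continuousOn hmem
  have hwmem : w ∈ Set.Icc (0:ℝ) 1 := ⟨le_trans s.2.1 hw.1, le_trans hw.2 x.2.2⟩
  refine ⟨⟨w, hwmem⟩, Subtype.mk_le_mk.2 hw.1, Subtype.mk_le_mk.2 hw.2, ?_⟩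
  apply Subtype.ext
  rw [← hweq, rext_of_mem β hwmem]

lemma welldef_of_quot {Y : Type*} {ρ1 : I → I} {f : I → Y}
    (hrefl : ∀ s t, s ≤ t → ρ1 s = ρ1 t → ConstOn f s t) :
    ∀ s t, ρ1 s = ρ1 t → f s = f t := by
  intro s t h
  rcases le_total s t with hst | hst
  · exact ((hrefl s t hst h) t ⟨hst, le_rfl⟩).symm
  · exact (hrefl t s hst h.symm) s ⟨hst, le_rfl⟩

theorem reparEquiv_iff_common_source'
    {X : Type*} [TopologicalSpace X] [T2Space X]
    (p q : I → X) (hp : Continuous p) (hq : Continuous q) :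
    (∃ φ ψ : I → I, IsRepar φ ∧ IsRepar ψ ∧ p ∘ φ = q ∘ ψ) ↔
      ∃ (r : I → X) (φ ψ : I → I), Continuous r ∧ IsRepar φ ∧ IsRepar ψ ∧
        p = r ∘ φ ∧ q = r ∘ ψ := by
  constructor
  · rintro ⟨φ, ψ, hφ, hψ, heq⟩
    by_cases hc : ConstOn p 0 1
    · have hpc : ∀ x, p x = p 0 := fun x => hc x ⟨x.2.1, x.2.2⟩
      have hqc : ∀ y, q y = p 0 := by
        intro y
        obtain ⟨t, ht⟩ := hψ.surjective y
        have h1 := congrFun heq t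
        simp only [Function.comp_apply] at h1
        rw [← ht, ← h1, hpc]
      refine ⟨p, id, id, hp, isRepar_id, isRepar_id, rfl, ?_⟩
      funext y
      rw [Function.comp_apply, id_eq, hqc y, hpc y]
    · have hqnc : ¬ ConstOn q 0 1 := by
        intro hqc
        apply hc
        intro x hx
        obtain ⟨t, ht⟩ := hφ.surjective x
        obtain ⟨t0, ht0⟩ := hφ.surjective 0
        have h1 := congrFun heq t
        have h2 := congrFun heq t0
        simp only [Function.comp_apply] at h1 h2
        rw [← ht, ← ht0, h1, h2]
        rw [hqc (ψ t) ⟨(ψ t).2.1, (ψ t).2.2⟩, hqc (ψ t0) ⟨(ψ t0).2.1, (ψ t0).2.2⟩]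
      obtain ⟨ρp, hρp, hρpsurj, hρpconst, hρprefl⟩ := exists_quot hp hc
      obtain ⟨ρq, hρq, hρqsurj, hρqconst, hρqrefl⟩ := exists_quot hq hqnc
      obtain ⟨rp, hrpc, hrpcomp⟩ := descend hρp.1 hρpsurj hp (welldef_of_quot hρprefl)
      obtain ⟨rq, hrqc, hrqcomp⟩ := descend hρq.1 hρqsurj hq (welldef_of_quot hρqrefl)
      set α : I → I := ρp ∘ φ with hα
      set β : I → I := ρq ∘ ψ with hβ
      have hαr : IsRepar α := hρp.comp hφ
      have hβr : IsRepar β := hρq.comp hψ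
      have heqs : ∀ t, rp (α t) = rq (β t) := by
        intro t
        show rp (ρp (φ t)) = rq (ρq (ψ t))
        have h1 := congrFun hrpcomp (φ t)
        have h2 := congrFun hrqcomp (ψ t)
        have h3 := congrFun heq t
        simp only [Function.comp_apply] at h1 h2 h3
        rw [h1, h2]
        exact h3
      -- regularity of rp and rq
      have hrpreg : ∀ y y', y ≤ y' → ConstOn rp y y' → y = y' := by
        intro y y' hyy hcr
        obtain ⟨s, hs⟩ := hρpsurj y
        obtain ⟨t, ht⟩ := hρpsurj y'
        rcases le_total s t with hst | hst
        · have : ConstOn p s t := by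
            intro x hx
            have h1 : rp (ρp x) = p x := by
              have := congrFun hrpcomp x; simpa using this
            have h2 : rp (ρp s) = p s := by
              have := congrFun hrpcomp s; simpa using this
            have hxm : ρp x ∈ Set.Icc y y' := by
              rw [← hs, ← ht]
              exact ⟨hρp.2.1 hx.1, hρp.2.1 hx.2⟩
            have hsm : ρp s ∈ Set.Icc y y' := by rw [hs]; exact ⟨le_rfl, hyy⟩
            rw [← h1, ← h2, hcr _ hxm, hcr _ hsm]
          rw [← hs, ← ht, hρpconst s t hst this]
        · have : y' ≤ y := by rw [← hs, ← ht]; exact hρp.2.1 hst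
          exact le_antisymm hyy this
      have hrqreg : ∀ y y', y ≤ y' → ConstOn rq y y' → y = y' := by
        intro y y' hyy hcr
        obtain ⟨s, hs⟩ := hρqsurj y
        obtain ⟨t, ht⟩ := hρqsurj y'
        rcases le_total s t with hst | hst
        · have : ConstOn q s t := by
            intro x hx
            have h1 : rq (ρq x) = q x := by
              have := congrFun hrqcomp x; simpa using this
            have h2 : rq (ρq s) = q s := by
              have := congrFun hrqcomp s; simpa using this
            have hxm : ρq x ∈ Set.Icc y y' := by
              rw [← hs, ← ht]
              exact ⟨hρq.2.1 hx.1, hρq.2.1 hx.2⟩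
            have hsm : ρq s ∈ Set.Icc y y' := by rw [hs]; exact ⟨le_rfl, hyy⟩
            rw [← h1, ← h2, hcr _ hxm, hcr _ hsm]
          rw [← hs, ← ht, hρqconst s t hst this]
        · have : y' ≤ y := by rw [← hs, ← ht]; exact hρq.2.1 hst
          exact le_antisymm hyy this
      -- α-constancy implies β-constancy
      have hconst_αβ : ∀ s t, s ≤ t → ConstOn α s t → ConstOn β s t := by
        intro s t hst hca x hx
        have hβs : β s ≤ β x := hβr.2.1 hx.1
        have key : β s = β x := by
          apply hrqreg (β s) (β x) hβs
          intro z hz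
          obtain ⟨w, hw1, hw2, hw3⟩ := ivt_I hβr.1 hx.1 hz.1 hz.2
          rw [← hw3, ← heqs w, hca w ⟨hw1, le_trans hw2 hx.2⟩, heqs s]
        exact key.symm
      obtain hαnc : ¬ ConstOn α 0 1 := by
        intro h
        have h1 := h 1 ⟨Subtype.mk_le_mk.2 zero_le_one, le_rfl⟩
        rw [hαr.2.2.2, hαr.2.2.1] at h1
        exact one_ne_zero (congrArg Subtype.val h1)
      obtain ⟨ρ1, hρ1, hρ1surj, hρ1const, hρ1refl⟩ := exists_quot (X := I) hαr.1 hαnc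
      obtain ⟨A, hAc, hAcomp⟩ := descend hρ1.1 hρ1surj hαr.1 (welldef_of_quot hρ1refl)
      have hβrefl : ∀ s t, s ≤ t → ρ1 s = ρ1 t → ConstOn β s t :=
        fun s t hst h => hconst_αβ s t hst (hρ1refl s t hst h)
      obtain ⟨B, hBc, hBcomp⟩ := descend hρ1.1 hρ1surj hβr.1 (welldef_of_quot hβrefl)
      -- monotonicity
      have hmonoAB : ∀ (γ : I → I) (C : I → I), Monotone γ → C ∘ ρ1 = γ → Monotone C := by
        intro γ C hγ hC y y' hyy
        obtain ⟨s, hs⟩ := hρ1surj y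
        obtain ⟨t, ht⟩ := hρ1surj y'
        rcases le_total s t with hst | hst
        · rw [← hs, ← ht, ← Function.comp_apply (f := C), ← Function.comp_apply (f := C), hC]
          exact hγ hst
        · have : y' ≤ y := by rw [← hs, ← ht]; exact hρ1.2.1 hst
          have : y = y' := le_antisymm hyy this
          rw [this]
      have hAmono : Monotone A := hmonoAB α A hαr.2.1 hAcomp
      have hBmono : Monotone B := hmonoAB β B hβr.2.1 hBcomp
      have hAstrict : StrictMono A := by
        intro y y' hlt
        obtain ⟨s, hs⟩ := hρ1surj y
        obtain ⟨t, ht⟩ := hρ1surj y'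
        have hst : s ≤ t := by
          rcases le_total s t with h | h
          · exact h
          · exfalso
            have : y' ≤ y := by rw [← hs, ← ht]; exact hρ1.2.1 h
            exact absurd hlt (not_lt.2 this)
        have hne : ¬ ConstOn α s t := by
          intro hcα
          have := hρ1const s t hst hcα
          rw [hs, ht] at this
          exact absurd this hlt.ne
        have : ∃ x ∈ Set.Icc s t, α x ≠ α s := by
          by_contra hcon
          push_neg at hcon
          exact hne hcon
        obtain ⟨x, hx, hxne⟩ := this
        have h1 : A y = α s := by rw [← hs, ← Function.comp_apply (f := A), hAcomp]
        have h2 : A y' = α t := by rw [← ht, ← Function.comp_apply (f := A), hAcomp]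
        rw [h1, h2]
        exact lt_of_lt_of_le (lt_of_le_of_ne (hαr.2.1 hx.1) (Ne.symm hxne)) (hαr.2.1 hx.2)
      have hends : ∀ (γ : I → I) (C : I → I), C ∘ ρ1 = γ → γ 0 = 0 → γ 1 = 1 →
          C 0 = 0 ∧ C 1 = 1 := by
        intro γ C hC h0 h1
        constructor
        · have h2 := congrFun hC 0
          simp only [Function.comp_apply] at h2
          rw [hρ1.2.2.1] at h2
          rw [h2, h0]
        · have h2 := congrFun hC 1
          simp only [Function.comp_apply] at h2
          rw [hρ1.2.2.2] at h2
          rw [h2, h1]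
      obtain ⟨hA0, hA1⟩ := hends α A hAcomp hαr.2.2.1 hαr.2.2.2
      obtain ⟨hB0, hB1⟩ := hends β B hBcomp hβr.2.2.1 hβr.2.2.2
      have hArepar : IsRepar A := ⟨hAc, hAstrict.monotone, hA0, hA1⟩
      have hBrepar : IsRepar B := ⟨hBc, hBmono, hB0, hB1⟩
      have hAbij : Function.Bijective A := ⟨hAstrict.injective, hArepar.surjective⟩
      set E : I ≃ I := Equiv.ofBijective A hAbij with hE
      have hEc : Continuous ⇑E := hAc
      set homeo := Continuous.homeoOfEquivCompactToT2 (f := E) hEc with hhomeo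
      set Ai : I → I := ⇑homeo.symm with hAi
      have hAi_right : ∀ y, A (Ai y) = y := fun y => homeo.apply_symm_apply y
      have hAi_left : ∀ x, Ai (A x) = x := fun x => homeo.symm_apply_apply x
      have hAimono : Monotone Ai := by
        intro y y' h
        by_contra hcon
        push_neg at hcon
        have := hAstrict hcon
        rw [hAi_right, hAi_right] at this
        exact absurd h (not_le.2 this)
      have hAicont : Continuous Ai := homeo.symm.continuous
      have hAi0 : Ai 0 = 0 := by have := hAi_left 0; rwa [hA0] at this
      have hAi1 : Ai 1 = 1 := by have := hAi_left 1; rwa [hA1] at this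
      have hAirepar : IsRepar Ai := ⟨hAicont, hAimono, hAi0, hAi1⟩
      have hkeyAB : ∀ y, rp (A y) = rq (B y) := by
        intro y
        obtain ⟨s, hs⟩ := hρ1surj y
        have h1 : A (ρ1 s) = α s := by have := congrFun hAcomp s; simpa using this
        have h2 : B (ρ1 s) = β s := by have := congrFun hBcomp s; simpa using this
        rw [← hs, h1, h2]
        exact heqs s
      refine ⟨rq, B ∘ (Ai ∘ ρp), ρq, hrqc, hBrepar.comp (hAirepar.comp hρp), hρq, ?_, ?_⟩
      · funext x
        show p x = rq (B (Ai (ρp x)))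
        have h1 : rp (ρp x) = p x := by have := congrFun hrpcomp x; simpa using this
        rw [← hkeyAB, hAi_right, h1]
      · exact hrqcomp.symm
  · rintro ⟨r, φ, ψ, hr, hφ, hψ, hpeq, hqeq⟩
    obtain ⟨a, b, ha, hb, hab⟩ := exists_pullback hφ hψ
    refine ⟨a, b, ha, hb, ?_⟩
    rw [hpeq, hqeq, Function.comp_assoc, Function.comp_assoc, hab]

end Main


/-- Paths `p, q : I → X` in a Hausdorff space are reparametrization
equivalent if and only if there are a path `r` and reparametrizations
`φ, ψ` with `p = r ∘ φ` and `q = r ∘ ψ`. -/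
theorem reparEquiv_iff_common_source
    {X : Type*} [TopologicalSpace X] [T2Space X]
    (p q : I → X) (hp : Continuous p) (hq : Continuous q) :
    ReparEquiv p q ↔
      ∃ (r : I → X) (φ ψ : I → I), Continuous r ∧ IsRepar φ ∧ IsRepar ψ ∧
        p = r ∘ φ ∧ q = r ∘ ψ := by
  exact reparEquiv_iff_common_source' p q hp hq
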